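/- Let A = A₁ + A₂ − 2B be an n×n matrix with A₁ = a₁' a₁ᵀ, A₂ = a₂' a₂ᵀ rank-one, and B arbitrary. Suppose V ∈ ℝ^{n×(k+2)} has orthonormal columns and ‖B(I − VVᵀ)‖_F ≤ (1+ε)‖B − B_{k+2}‖_F. Let W be an orthonormal basis of span(columns of V, a₁, a₂), so W has at most k+4 columns. Then ‖A(I − WWᵀ)‖_F ≤ 2(1+ε)‖B − B_{k+2}‖_F ≤ (1+ε)‖A − A_k‖_F. In particular, A W Wᵀ is a rank-(k+4) matrix achieving the relative-error rank-k approximation guarantee for A. -/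

import Mathlib

open Matrix

/-- Frobenius norm. -/
noncomputable def frobNorm {m n : ℕ} (M : Matrix (Fin m) (Fin n) ℝ) : ℝ :=
  Real.sqrt (∑ i, ∑ j, (M i j) ^ 2)


noncomputable def frobSq {m n : ℕ} (M : Matrix (Fin m) (Fin n) ℝ) : ℝ :=
  ∑ i, ∑ j, (M i j) ^ 2

lemma frobSq_nonneg {m n : ℕ} (M : Matrix (Fin m) (Fin n) ℝ) : 0 ≤ frobSq M := by
  apply Finset.sum_nonneg; intro i _; apply Finset.sum_nonneg; intro j _; positivity

lemma frobNorm_eq {m n : ℕ} (M : Matrix (Fin m) (Fin n) ℝ) :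
    frobNorm M = Real.sqrt (frobSq M) := rfl

lemma frobSq_eq_trace {m n : ℕ} (M : Matrix (Fin m) (Fin n) ℝ) :
    frobSq M = (Mᵀ * M).trace := by
  simp only [frobSq, Matrix.trace, Matrix.diag, Matrix.mul_apply, Matrix.transpose_apply, sq]
  exact Finset.sum_comm

lemma frobNorm_mono {m n : ℕ} {M N : Matrix (Fin m) (Fin n) ℝ}
    (h : frobSq M ≤ frobSq N) : frobNorm M ≤ frobNorm N :=
  Real.sqrt_le_sqrt h

lemma frobNorm_smul {m n : ℕ} (c : ℝ) (M : Matrix (Fin m) (Fin n) ℝ) :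
    frobNorm (c • M) = |c| * frobNorm M := by
  simp only [frobNorm, Matrix.smul_apply, smul_eq_mul, mul_pow, ← Finset.mul_sum]
  rw [Real.sqrt_mul (sq_nonneg c), Real.sqrt_sq_eq_abs]

lemma frobSq_mul_proj {m n : ℕ} (M : Matrix (Fin m) (Fin n) ℝ)
    (P : Matrix (Fin n) (Fin n) ℝ) (hPs : Pᵀ = P) (hPi : P * P = P) :
    frobSq (M * P) = (Mᵀ * M * P).trace := by
  rw [frobSq_eq_trace, Matrix.transpose_mul, hPs]
  calc (P * Mᵀ * (M * P)).trace = (P * (Mᵀ * M * P)).trace := by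
        rw [← Matrix.mul_assoc, Matrix.mul_assoc P Mᵀ M, Matrix.mul_assoc P (Mᵀ * M) P]
    _ = (Mᵀ * M * P * P).trace := Matrix.trace_mul_comm _ _
    _ = (Mᵀ * M * P).trace := by rw [Matrix.mul_assoc, hPi]

/-- Multiplying on the right by a symmetric idempotent does not increase Frobenius norm. -/
lemma frobNorm_mul_proj_le {m n : ℕ} (M : Matrix (Fin m) (Fin n) ℝ)
    (P : Matrix (Fin n) (Fin n) ℝ) (hPs : Pᵀ = P) (hPi : P * P = P) :
    frobNorm (M * P) ≤ frobNorm M := by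
  apply frobNorm_mono
  have hQs : (1 - P)ᵀ = 1 - P := by rw [Matrix.transpose_sub, Matrix.transpose_one, hPs]
  have hQi : (1 - P) * (1 - P) = 1 - P := by
    simp [Matrix.sub_mul, Matrix.mul_sub, hPi]
  have h1 := frobSq_mul_proj M P hPs hPi
  have h2 := frobSq_mul_proj M (1 - P) hQs hQi
  have h3 : frobSq (M * P) + frobSq (M * (1 - P)) = frobSq M := by
    rw [h1, h2, ← Matrix.trace_add, ← Matrix.mul_add]
    rw [show P + (1 - P) = (1 : Matrix (Fin n) (Fin n) ℝ) by abel]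
    rw [Matrix.mul_one, frobSq_eq_trace]
  nlinarith [frobSq_nonneg (M * (1 - P))]

lemma matrixRank_add_le {n : ℕ} (X Y : Matrix (Fin n) (Fin n) ℝ) :
    (X + Y).rank ≤ X.rank + Y.rank := by
  classical
  unfold Matrix.rank
  rw [Matrix.mulVecLin_add]
  have hle : LinearMap.range (X.mulVecLin + Y.mulVecLin) ≤
      LinearMap.range X.mulVecLin ⊔ LinearMap.range Y.mulVecLin := by
    rintro x ⟨y, rfl⟩
    exact Submodule.mem_sup.2 ⟨X.mulVecLin y, ⟨y, rfl⟩, Y.mulVecLin y, ⟨y, rfl⟩, rfl⟩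
  exact (Submodule.finrank_mono hle).trans
    (Submodule.finrank_add_le_finrank_add_finrank _ _)

lemma matrixRank_smul_le {n : ℕ} (c : ℝ) (X : Matrix (Fin n) (Fin n) ℝ) :
    (c • X).rank ≤ X.rank := by
  rw [show c • X = (c • (1 : Matrix (Fin n) (Fin n) ℝ)) * X by rw [Matrix.smul_mul,
    Matrix.one_mul]]
  exact Matrix.rank_mul_le_right _ _

lemma rank_vecMulVec_le {n : ℕ} (u v : Fin n → ℝ) :
    (Matrix.vecMulVec u v).rank ≤ 1 := by
  rw [Matrix.vecMulVec_eq Unit u v]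
  exact (Matrix.rank_mul_le_left _ _).trans
    ((Matrix.rank_le_card_width _).trans (by simp))


/-- Bi-criteria guarantee for squared-Euclidean distance matrices.
If `A = A₁ + A₂ − 2B` with `A₁ = a₁' a₁ᵀ`, `A₂ = a₂' a₂ᵀ` rank one, `V` has `k+2`
orthonormal columns with `‖B(I − VVᵀ)‖_F ≤ (1+ε)‖B − B_{k+2}‖_F`, and `W` is an
orthonormal basis of `span(V, a₁, a₂)` (at most `k+4` columns, span containing `V`'s
columns and `a₁, a₂`), then
`‖A(I − WWᵀ)‖_F ≤ 2(1+ε)‖B − B_{k+2}‖_F ≤ (1+ε)‖A − A_k‖_F`. -/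
theorem stmt17 (n k s : ℕ) (hs : s ≤ k + 4) (ε : ℝ) (hε : 0 ≤ ε)
    (a₁ a₁' a₂ a₂' : Fin n → ℝ)
    (A A₁ A₂ B Ak Bk2 : Matrix (Fin n) (Fin n) ℝ)
    (hA₁ : A₁ = Matrix.vecMulVec a₁' a₁)
    (hA₂ : A₂ = Matrix.vecMulVec a₂' a₂)
    (hA : A = A₁ + A₂ - 2 • B)
    (hAkrank : Ak.rank ≤ k)
    (hAkopt : ∀ R : Matrix (Fin n) (Fin n) ℝ, R.rank ≤ k →
      frobNorm (A - Ak) ≤ frobNorm (A - R))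
    (hBk2rank : Bk2.rank ≤ k + 2)
    (hBk2opt : ∀ S : Matrix (Fin n) (Fin n) ℝ, S.rank ≤ k + 2 →
      frobNorm (B - Bk2) ≤ frobNorm (B - S))
    (V : Matrix (Fin n) (Fin (k + 2)) ℝ) (hV : Vᵀ * V = 1)
    (hVgood : frobNorm (B * (1 - V * Vᵀ)) ≤ (1 + ε) * frobNorm (B - Bk2))
    (W : Matrix (Fin n) (Fin s) ℝ) (hW : Wᵀ * W = 1)
    (hWV : W * Wᵀ * V = V)
    (hWa₁ : (W * Wᵀ) *ᵥ a₁ = a₁) (hWa₂ : (W * Wᵀ) *ᵥ a₂ = a₂) :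
    frobNorm (A * (1 - W * Wᵀ)) ≤ 2 * (1 + ε) * frobNorm (B - Bk2) ∧
    2 * (1 + ε) * frobNorm (B - Bk2) ≤ (1 + ε) * frobNorm (A - Ak) := by
  set P : Matrix (Fin n) (Fin n) ℝ := W * Wᵀ with hP
  have hPs : Pᵀ = P := by rw [hP, Matrix.transpose_mul, Matrix.transpose_transpose]
  have hPi : P * P = P := by
    rw [hP, Matrix.mul_assoc, ← Matrix.mul_assoc Wᵀ W Wᵀ, hW, Matrix.one_mul]
  have hQs : (1 - P)ᵀ = 1 - P := by rw [Matrix.transpose_sub, Matrix.transpose_one, hPs]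
  have hQi : (1 - P) * (1 - P) = 1 - P := by simp [Matrix.sub_mul, Matrix.mul_sub, hPi]
  -- rank-one parts annihilated by 1 - P
  have key : ∀ (u v : Fin n → ℝ), P *ᵥ v = v → Matrix.vecMulVec u v * (1 - P) = 0 := by
    intro u v hv
    have hvP : v ᵥ* P = v := by
      rw [← hPs, Matrix.vecMul_transpose, hv]
    ext i j
    have hvPj : ∑ l, v l * P l j = v j := by
      have := congrFun hvP j
      simpa [Matrix.vecMul, dotProduct] using this
    simp only [Matrix.mul_apply, Matrix.vecMulVec_apply, Matrix.sub_apply, Matrix.one_apply,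
      Matrix.zero_apply]
    calc ∑ l, u i * v l * ((if l = j then (1:ℝ) else 0) - P l j)
        = (∑ l, if l = j then u i * v l else 0) - u i * ∑ l, v l * P l j := by
          rw [Finset.mul_sum, ← Finset.sum_sub_distrib]
          refine Finset.sum_congr rfl fun l _ => ?_
          by_cases h : l = j <;> simp [h] <;> ring
      _ = 0 := by
          rw [Finset.sum_ite_eq' Finset.univ j (fun l => u i * v l), hvPj]
          simp
  have hA1P : A₁ * (1 - P) = 0 := by rw [hA₁]; exact key a₁' a₁ hWa₁
  have hA2P : A₂ * (1 - P) = 0 := by rw [hA₂]; exact key a₂' a₂ hWa₂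
  have hAP : A * (1 - P) = (-2 : ℝ) • (B * (1 - P)) := by
    rw [hA, Matrix.sub_mul, Matrix.add_mul, hA1P, hA2P, two_smul, Matrix.add_mul]
    ext i j
    simp only [Matrix.sub_apply, Matrix.add_apply, Matrix.zero_apply, Matrix.smul_apply,
      smul_eq_mul]
    ring
  -- projection comparison
  have hVP : V * Vᵀ * P = V * Vᵀ := by
    have hVt : Vᵀ * P = Vᵀ := by
      have := congrArg Matrix.transpose hWV
      rwa [Matrix.transpose_mul, hPs] at this
    rw [Matrix.mul_assoc, hVt]
  have hfactor : B * (1 - P) = (B * (1 - V * Vᵀ)) * (1 - P) := by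
    rw [Matrix.mul_assoc]
    congr 1
    rw [Matrix.sub_mul, Matrix.one_mul, Matrix.mul_sub, Matrix.mul_one, hVP]
    abel
  have hBP : frobNorm (B * (1 - P)) ≤ frobNorm (B * (1 - V * Vᵀ)) := by
    rw [hfactor]
    exact frobNorm_mul_proj_le _ _ hQs hQi
  have hApart : frobNorm (A * (1 - P)) = 2 * frobNorm (B * (1 - P)) := by
    rw [hAP, frobNorm_smul]
    norm_num
  constructor
  · rw [hApart]
    nlinarith [hBP, hVgood]
  · -- second inequality
    set S : Matrix (Fin n) (Fin n) ℝ := (2 : ℝ)⁻¹ • (A₁ + (A₂ + (-1 : ℝ) • Ak)) with hS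
    have hSrank : S.rank ≤ k + 2 := by
      calc S.rank ≤ (A₁ + (A₂ + (-1 : ℝ) • Ak)).rank := matrixRank_smul_le _ _
        _ ≤ A₁.rank + (A₂ + (-1 : ℝ) • Ak).rank := matrixRank_add_le _ _
        _ ≤ A₁.rank + (A₂.rank + ((-1 : ℝ) • Ak).rank) :=
            Nat.add_le_add_left (matrixRank_add_le _ _) _
        _ ≤ 1 + (1 + k) := by
            have h1 : A₁.rank ≤ 1 := hA₁ ▸ _root_.rank_vecMulVec_le a₁' a₁
            have h2 : A₂.rank ≤ 1 := hA₂ ▸ _root_.rank_vecMulVec_le a₂' a₂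
            have h3 : ((-1 : ℝ) • Ak).rank ≤ k := (matrixRank_smul_le _ _).trans hAkrank
            omega
        _ ≤ k + 2 := by omega
    have hBS : B - S = (-(2 : ℝ)⁻¹) • (A - Ak) := by
      rw [hS, hA, two_smul]
      ext i j
      simp only [Matrix.sub_apply, Matrix.add_apply, Matrix.smul_apply, smul_eq_mul,
        Matrix.neg_apply]
      ring
    have hBSfrob : frobNorm (B - S) = (2 : ℝ)⁻¹ * frobNorm (A - Ak) := by
      rw [hBS, frobNorm_smul]
      norm_num
    have := hBk2opt S hSrank
    rw [hBSfrob] at this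
    nlinarith [this]
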